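/- Let C ⊆ ℕ, let H be a C-2-hyperimmune bifamily, and let G ⊆ ℕ be a set of C-hyperimmune-free degree, i.e., every function f : ℕ → ℕ Turing reducible to C ⊕ G is dominated by some C-computable function. Then H is (C ⊕ G)-2-hyperimmune. -/

import Mathlib

namespace Paper

/-- `RecIn O f` : the partial function `f` is partial recursive relative to the oracle `O`.
This is the inductive definition of oracle computability, mirroring `Nat.Partrec`
with an extra constructor for the oracle. -/
inductive RecIn (O : ℕ →. ℕ) : (ℕ →. ℕ) → Prop
  | oracle : RecIn O O
  | zero : RecIn O (pure 0)
  | succ : RecIn O Nat.succ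
  | left : RecIn O ↑fun n : ℕ => n.unpair.1
  | right : RecIn O ↑fun n : ℕ => n.unpair.2
  | pair {f g} : RecIn O f → RecIn O g → RecIn O fun n => Nat.pair <$> f n <*> g n
  | comp {f g} : RecIn O f → RecIn O g → RecIn O fun n => g n >>= f
  | prec {f g} : RecIn O f → RecIn O g → RecIn O (Nat.unpaired fun a n =>
      n.rec (f a) fun y IH => do let i ← IH; g (Nat.pair a (Nat.pair y i)))
  | rfind {f} : RecIn O f → RecIn O fun a =>
      Nat.rfind fun n => (fun m => m = 0) <$> f (Nat.pair a n)

/-- Characteristic function of a set of naturals. -/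
noncomputable def chi (C : Set ℕ) : ℕ → ℕ := C.indicator fun _ => 1

/-- A (total) function `f : ℕ → ℕ` is Turing reducible to the set `C`. -/
noncomputable def FunRecIn (C : Set ℕ) (f : ℕ → ℕ) : Prop := RecIn (chi C) f

/-- A set `A` is Turing reducible to the set `C`. -/
noncomputable def SetRecIn (C A : Set ℕ) : Prop := FunRecIn C (chi A)

/-- Turing join of two sets. -/
def join (A B : Set ℕ) : Set ℕ :=
  {n | (∃ k ∈ A, n = 2 * k) ∨ (∃ k ∈ B, n = 2 * k + 1)}

/-- A bifamily: a collection of pairs of finite sets closed downward under the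
product subset relation. -/
def Bifamily (H : Set (Finset ℕ × Finset ℕ)) : Prop :=
  ∀ C D E F : Finset ℕ, (C, D) ∈ H → E ⊆ C → F ⊆ D → (E, F) ∈ H

/-- The pair of maps `(E, F)` forms a biarray. -/
def IsBiarray (E : ℕ → Finset ℕ) (F : ℕ → ℕ → Finset ℕ) : Prop :=
  (∀ n x, x ∈ E n → n < x) ∧ (∀ n m x, x ∈ F n m → m < x)

/-- The biarray `(E, F)` is Turing reducible to `C` (via canonical indices of finite sets). -/
noncomputable def BiarrayRecIn (C : Set ℕ) (E : ℕ → Finset ℕ) (F : ℕ → ℕ → Finset ℕ) : Prop :=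
  FunRecIn C (fun n => Encodable.encode (E n)) ∧
  FunRecIn C (fun p => Encodable.encode (F p.unpair.1 p.unpair.2))

/-- The biarray `(E, F)` meets the bifamily `H`. -/
def Meets (H : Set (Finset ℕ × Finset ℕ)) (E : ℕ → Finset ℕ) (F : ℕ → ℕ → Finset ℕ) : Prop :=
  ∃ n m, (E n, F n m) ∈ H

/-- The bifamily `H` is `C`-2-hyperimmune: every `C`-computable biarray meets `H`. -/
noncomputable def Is2HyperimmuneIn (C : Set ℕ) (H : Set (Finset ℕ × Finset ℕ)) : Prop :=
  ∀ E : ℕ → Finset ℕ, ∀ F : ℕ → ℕ → Finset ℕ,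
    IsBiarray E F → BiarrayRecIn C E F → Meets H E F

/-- The set `A` is `C`-hyperimmune. -/
noncomputable def HyperimmuneIn (C : Set ℕ) (A : Set ℕ) : Prop :=
  ∀ V : ℕ → Finset ℕ, (∀ n x, x ∈ V n → n < x) →
    FunRecIn C (fun n => Encodable.encode (V n)) →
    ∃ n, ∀ x ∈ V n, x ∉ A

/-- `G` is thin for the coloring `f` of `n`-element sets with `k` colors. -/
def Thin (n k : ℕ) (f : Finset ℕ → ℕ) (G : Set ℕ) : Prop :=
  ∃ i < k, ∀ σ : Finset ℕ, ↑σ ⊆ G → σ.card = n → f σ ≠ i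

/-- `G` is free for the coloring `f` of `n`-element sets. -/
def Free (n : ℕ) (f : Finset ℕ → ℕ) (G : Set ℕ) : Prop :=
  ∀ σ : Finset ℕ, ↑σ ⊆ G → σ.card = n → f σ ∈ G → f σ ∈ σ

/-- The coloring `f` (of finite sets) is Turing reducible to `C`,
via the canonical coding of finite sets. -/
noncomputable def ColorRecIn (C : Set ℕ) (f : Finset ℕ → ℕ) : Prop :=
  FunRecIn C (fun x => f (((Encodable.decode x : Option (Finset ℕ))).getD ∅))

/-- A coloring of pairs is stable if `lim_s f(x, s)` exists for every `x`. -/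
def StableColoring (f : Finset ℕ → ℕ) : Prop :=
  ∀ x, ∃ i, ∃ N, ∀ s, N ≤ s → f {x, s} = i

/-- `C_i(f)` : the set of `x` such that `f(x, s) = i` for all but finitely many `s`. -/
def Climit (f : Finset ℕ → ℕ) (i : ℕ) : Set ℕ :=
  {x | ∃ N, ∀ s, N ≤ s → f {x, s} = i}

/-- `T` is a tournament: irreflexive and exactly one of `T x y`, `T y x` for `x ≠ y`. -/
def Tournament (T : ℕ → ℕ → Prop) : Prop :=
  (∀ x, ¬ T x x) ∧ ∀ x y, x ≠ y → Xor' (T x y) (T y x)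

/-- `H` is `T`-transitive. -/
def TransitiveIn (T : ℕ → ℕ → Prop) (H : Set ℕ) : Prop :=
  ∀ x ∈ H, ∀ y ∈ H, ∀ z ∈ H, T x y → T y z → T x z

/-- A tournament is stable if every `x` beats, or is beaten by, all but finitely many `y`. -/
def StableTournament (T : ℕ → ℕ → Prop) : Prop :=
  ∀ x, {y | ¬ T x y}.Finite ∨ {y | ¬ T y x}.Finite

/-- Coding of a binary relation on `ℕ` as a set of naturals. -/
def codeRel (T : ℕ → ℕ → Prop) : Set ℕ := {n | T n.unpair.1 n.unpair.2}

/-- The relation `T` is Turing reducible to `C`. -/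
noncomputable def RelRecIn (C : Set ℕ) (T : ℕ → ℕ → Prop) : Prop :=
  FunRecIn C (chi (codeRel T))

/-- `A →_T B`. -/
def Arrow (T : ℕ → ℕ → Prop) (A B : Set ℕ) : Prop := ∀ x ∈ A, ∀ y ∈ B, T x y

/-- The tournament `T` diagonalizes against the pair `(A, B)`. -/
def DiagAgainst (T : ℕ → ℕ → Prop) (A B : Set ℕ) : Prop :=
  Arrow T A B ∧ {x | ¬ (Arrow T B {x} ∧ Arrow T {x} A)}.Finite

/-- The maps form a 4-array. -/
def Is4Array (E : ℕ → Finset ℕ) (E' : ℕ → ℕ → ℕ → Finset ℕ)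
    (F : ℕ → ℕ → Finset ℕ) (F' : ℕ → ℕ → ℕ → Finset ℕ) : Prop :=
  (∀ n x, x ∈ E n → n < x) ∧ (∀ n m l x, x ∈ E' n m l → m < x) ∧
  (∀ n m x, x ∈ F n m → n < x) ∧ (∀ n m l x, x ∈ F' n m l → l < x)

/-- The 4-array is Turing reducible to `C`. -/
noncomputable def FourArrayRecIn (C : Set ℕ) (E : ℕ → Finset ℕ) (E' : ℕ → ℕ → ℕ → Finset ℕ)
    (F : ℕ → ℕ → Finset ℕ) (F' : ℕ → ℕ → ℕ → Finset ℕ) : Prop :=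
  FunRecIn C (fun n => Encodable.encode (E n)) ∧
  FunRecIn C (fun p => Encodable.encode (E' p.unpair.1 p.unpair.2.unpair.1 p.unpair.2.unpair.2)) ∧
  FunRecIn C (fun p => Encodable.encode (F p.unpair.1 p.unpair.2)) ∧
  FunRecIn C (fun p => Encodable.encode (F' p.unpair.1 p.unpair.2.unpair.1 p.unpair.2.unpair.2))

/-- The pair of tournaments `(T₀, T₁)` is `C`-4-hyperimmune. -/
noncomputable def Is4HyperimmuneIn (C : Set ℕ) (T₀ T₁ : ℕ → ℕ → Prop) : Prop :=
  ∀ E : ℕ → Finset ℕ, ∀ E' : ℕ → ℕ → ℕ → Finset ℕ,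
  ∀ F : ℕ → ℕ → Finset ℕ, ∀ F' : ℕ → ℕ → ℕ → Finset ℕ,
    Is4Array E E' F F' → FourArrayRecIn C E E' F F' →
    ∃ n m l, DiagAgainst T₀ ↑(E n) ↑(E' n m l) ∧ DiagAgainst T₁ ↑(F n m) ↑(F' n m l)

/-- `A ⊆* B` : inclusion up to finitely many elements. -/
def SubsetStar (A B : Set ℕ) : Prop := (A \ B).Finite

/-- `G` is cohesive for the sequence `R`. -/
def Cohesive (R : ℕ → Set ℕ) (G : Set ℕ) : Prop :=
  G.Infinite ∧ ∀ i, SubsetStar G (R i) ∨ SubsetStar G (R i)ᶜ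

/-- Coding of a sequence of sets as a single set. -/
def codeSeq (R : ℕ → Set ℕ) : Set ℕ := {n | n.unpair.2 ∈ R n.unpair.1}

/-- Coding of a set of binary strings (e.g. a binary tree) as a set of naturals. -/
def codeTree (Tr : Set (List Bool)) : Set ℕ := {n | ∃ l ∈ Tr, Encodable.encode l = n}

/-- `Tr` is a binary tree: a set of binary strings closed under prefixes. -/
def IsTree (Tr : Set (List Bool)) : Prop := ∀ l ∈ Tr, ∀ l' : List Bool, l' <+: l → l' ∈ Tr

/-- `P` is an infinite path through `Tr`. -/
def IsPath (Tr : Set (List Bool)) (P : ℕ → Bool) : Prop :=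
  ∀ k, (List.ofFn fun i : Fin k => P i) ∈ Tr

/-- Coding of a coloring of finite sets as a set of naturals (its graph). -/
def codeColor (f : Finset ℕ → ℕ) : Set ℕ :=
  {n | ∃ σ : Finset ℕ, n = Nat.pair (Encodable.encode σ) (f σ)}

/-- `L` is a (strict) linear order on `ℕ`. -/
def LinearOrderRel (L : ℕ → ℕ → Prop) : Prop :=
  (∀ x, ¬ L x x) ∧ (∀ x y z, L x y → L y z → L x z) ∧ (∀ x y, x ≠ y → L x y ∨ L y x)

/-- `L` has order type `ω + ω*`. -/
def OmegaPlusOmegaStar (L : ℕ → ℕ → Prop) : Prop :=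
  ∃ A B : Set ℕ, (∀ x, x ∈ A ↔ x ∉ B) ∧
    (∀ a ∈ A, {y | L y a}.Finite) ∧ (∀ b ∈ B, {y | L b y}.Finite) ∧
    (∀ a ∈ A, ∀ b ∈ B, L a b)

/-- `S` is an ascending sequence for `L`. -/
def Ascending (L : ℕ → ℕ → Prop) (S : Set ℕ) : Prop :=
  ∀ x ∈ S, ∀ y ∈ S, x < y → L x y

/-- `S` is a descending sequence for `L`. -/
def Descending (L : ℕ → ℕ → Prop) (S : Set ℕ) : Prop :=
  ∀ x ∈ S, ∀ y ∈ S, x < y → L y x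

theorem RecIn.of_eq {O f g} (h : RecIn O f) (H : ∀ n, f n = g n) : RecIn O g :=
  (funext H : f = g) ▸ h

theorem recIn_of_partrec {O : ℕ →. ℕ} {f : ℕ →. ℕ} (h : Nat.Partrec f) : RecIn O f := by
  induction h with
  | zero => exact RecIn.zero
  | succ => exact RecIn.succ
  | left => exact RecIn.left
  | right => exact RecIn.right
  | pair _ _ ih₁ ih₂ => exact RecIn.pair ih₁ ih₂
  | comp _ _ ih₁ ih₂ => exact RecIn.comp ih₁ ih₂
  | prec _ _ ih₁ ih₂ => exact RecIn.prec ih₁ ih₂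
  | rfind _ ih => exact RecIn.rfind ih

theorem RecIn.totalComp {O : ℕ →. ℕ} {g h : ℕ → ℕ} (hh : RecIn O ↑h) (hg : RecIn O ↑g) :
    RecIn O ↑(fun n => h (g n)) := by
  refine (RecIn.comp hh hg).of_eq fun n => ?_
  simp [PFun.coe_val]
  exact Part.bind_some _ _

theorem RecIn.totalPair {O : ℕ →. ℕ} {g h : ℕ → ℕ} (hg : RecIn O ↑g) (hh : RecIn O ↑h) :
    RecIn O ↑(fun n => Nat.pair (g n) (h n)) := by
  refine (RecIn.pair hg hh).of_eq fun n => ?_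
  simp [PFun.coe_val, Seq.seq]

theorem recIn_id {O : ℕ →. ℕ} : RecIn O ↑(fun n : ℕ => n) :=
  recIn_of_partrec (Nat.Partrec.of_primrec Nat.Primrec.id)

/-- `codeIoc b j` is the canonical code of the finset `{b-j+1, ..., b}` (when `j ≤ b`). -/
def codeIoc (b : ℕ) : ℕ → ℕ
  | 0 => 0
  | j + 1 => (Nat.pair (b - j) (codeIoc b j)) + 1

theorem encode_Ioc (b : ℕ) : ∀ j k, b - k = j →
    Encodable.encode (Finset.Ioc k b) = codeIoc b j := by
  intro j
  induction j with
  | zero =>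
    intro k hk
    have : Finset.Ioc k b = ∅ := Finset.Ioc_eq_empty (by omega)
    rw [this]
    show Encodable.encode ((∅ : Finset ℕ).sort (· ≤ ·)) = _
    rw [Finset.sort_empty]
    exact Encodable.encode_list_nil
  | succ j ih =>
    intro k hk
    have hkb : k < b := by omega
    have h1 : Finset.Ioc k b = insert (k + 1) (Finset.Ioc (k + 1) b) := by
      rw [Finset.Ioc_insert_left (by omega), Finset.Icc_add_one_left_eq_Ioc]
    have h2 : (Finset.Ioc k b).sort (· ≤ ·) =
        (k + 1) :: (Finset.Ioc (k + 1) b).sort (· ≤ ·) := by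
      rw [h1]
      refine Finset.sort_insert _ ?_ ?_
      · intro x hx
        simp only [Finset.mem_Ioc] at hx
        omega
      · simp
    have h3 : Encodable.encode (Finset.Ioc k b) =
        Encodable.encode ((Finset.Ioc k b).sort (· ≤ ·)) := rfl
    rw [h3, h2, Encodable.encode_list_cons]
    have h4 : Encodable.encode ((Finset.Ioc (k+1) b).sort (· ≤ ·)) =
        Encodable.encode (Finset.Ioc (k+1) b) := rfl
    rw [h4, ih (k+1) (by omega)]
    show (Nat.pair (Encodable.encode (k+1)) (codeIoc b j)) + 1 = codeIoc b (j+1)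
    rw [Encodable.encode_nat]
    show (Nat.pair (k+1) (codeIoc b j)) + 1 = (Nat.pair (b - j) (codeIoc b j)) + 1
    congr 2
    omega

theorem elem_le_encode_list : ∀ (l : List ℕ), ∀ x ∈ l, x ≤ Encodable.encode l := by
  intro l
  induction l with
  | nil => simp
  | cons a l ih =>
    intro x hx
    rw [Encodable.encode_list_cons]
    rcases List.mem_cons.1 hx with h | h
    · subst h
      calc x = Encodable.encode x := (Encodable.encode_nat x).symm
        _ ≤ Nat.pair (Encodable.encode x) (Encodable.encode l) := Nat.left_le_pair _ _
        _ ≤ _ := Nat.le_succ _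
    · calc x ≤ Encodable.encode l := ih x h
        _ ≤ Nat.pair (Encodable.encode a) (Encodable.encode l) := Nat.right_le_pair _ _
        _ ≤ _ := Nat.le_succ _

theorem elem_le_encode (s : Finset ℕ) {x : ℕ} (hx : x ∈ s) : x ≤ Encodable.encode s := by
  have h : Encodable.encode s = Encodable.encode (s.sort (· ≤ ·)) := rfl
  rw [h]
  exact elem_le_encode_list _ x ((Finset.mem_sort _).2 hx)

/-- The inner total function: given `p = pair k b`, compute the code of `Ioc k b`. -/
def iocFun (p : ℕ) : ℕ := codeIoc p.unpair.2 (p.unpair.2 - p.unpair.1)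

theorem iocFun_pair (k b : ℕ) : iocFun (Nat.pair k b) = Encodable.encode (Finset.Ioc k b) := by
  rw [encode_Ioc b (b - k) k rfl]
  simp [iocFun]

theorem primrec_iocFun : Primrec iocFun := by
  have h1 : Primrec₂ codeIoc := by
    have := Primrec.nat_rec (α := ℕ) (β := ℕ) (f := fun _ => 0)
      (g := fun b p => (Nat.pair (b - p.1) p.2) + 1) (Primrec.const 0)
      (Primrec.succ.comp₂ <| Primrec₂.natPair.comp₂
        (Primrec.nat_sub.comp₂ Primrec₂.left (Primrec.fst.comp₂ Primrec₂.right))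
        (Primrec.snd.comp₂ Primrec₂.right))
    refine this.of_eq ?_
    intro b j
    induction j with
    | zero => rfl
    | succ j ih => simp [codeIoc, ← ih]
  have h2 : Primrec (fun p : ℕ => p.unpair.2) := Primrec.snd.comp Primrec.unpair
  have h3 : Primrec (fun p : ℕ => p.unpair.2 - p.unpair.1) :=
    Primrec.nat_sub.comp h2 (Primrec.fst.comp Primrec.unpair)
  exact h1.comp h2 h3

theorem recIn_iocFun {O : ℕ →. ℕ} : RecIn O ↑iocFun :=
  recIn_of_partrec (Nat.Partrec.of_primrec (Primrec.nat_iff.1 primrec_iocFun))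

theorem two_hyperimmune_of_hyperimmune_free (C : Set ℕ) (H : Set (Finset ℕ × Finset ℕ))
    (hH : Bifamily H) (h2 : Is2HyperimmuneIn C H) (G : Set ℕ)
    (hGfree : ∀ f : ℕ → ℕ, FunRecIn (join C G) f →
      ∃ g : ℕ → ℕ, FunRecIn C g ∧ ∀ n, f n ≤ g n) :
    Is2HyperimmuneIn (join C G) H := by
  intro E F hbi hrec
  obtain ⟨hE, hF⟩ := hrec
  obtain ⟨g1, hg1, hg1dom⟩ := hGfree _ hE
  obtain ⟨g2, hg2, hg2dom⟩ := hGfree _ hF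
  set E' : ℕ → Finset ℕ := fun n => Finset.Ioc n (g1 n) with hE'def
  set F' : ℕ → ℕ → Finset ℕ := fun n m => Finset.Ioc m (g2 (Nat.pair n m)) with hF'def
  have hbi' : IsBiarray E' F' := by
    constructor
    · intro n x hx; exact (Finset.mem_Ioc.1 hx).1
    · intro n m x hx; exact (Finset.mem_Ioc.1 hx).1
  have hrec1 : FunRecIn C (fun n => Encodable.encode (E' n)) := by
    have h : RecIn (chi C) ↑(fun n => iocFun (Nat.pair n (g1 n))) :=
      RecIn.totalComp recIn_iocFun (RecIn.totalPair recIn_id hg1)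
    refine h.of_eq fun n => ?_
    simp only [PFun.coe_val, iocFun_pair, hE'def]
  have hrec2 : FunRecIn C (fun p => Encodable.encode (F' p.unpair.1 p.unpair.2)) := by
    have h : RecIn (chi C) ↑(fun p => iocFun (Nat.pair p.unpair.2 (g2 p))) :=
      RecIn.totalComp recIn_iocFun (RecIn.totalPair RecIn.right hg2)
    refine h.of_eq fun p => ?_
    simp only [PFun.coe_val, iocFun_pair, hF'def, Nat.pair_unpair]
  obtain ⟨n, m, hnm⟩ := h2 E' F' hbi' ⟨hrec1, hrec2⟩
  refine ⟨n, m, hH _ _ _ _ hnm ?_ ?_⟩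
  · intro x hx
    refine Finset.mem_Ioc.2 ⟨hbi.1 n x hx, le_trans (elem_le_encode _ hx) (hg1dom n)⟩
  · intro x hx
    refine Finset.mem_Ioc.2 ⟨hbi.2 n m x hx, le_trans (elem_le_encode _ hx) ?_⟩
    have := hg2dom (Nat.pair n m)
    simpa using this

end Paper
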